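/- Let A > 0 and let σ : ℝ → ℂ be bounded, measurable and 2A-periodic (σ(z + 2A) = σ(z) for all z). Then for all t, s ∈ ℝ, ∫_{[-A,A]} σ(t − b) · conj(σ(s − b)) db = ψ(t − s), where ψ(u) := ∫_{[-A,A]} σ(v) · conj(σ(v − u)) dv. Consequently, if ν ∈ L¹(ℝ^m) is nonnegative and λ is the measure with density ν(a)·1_{[-A,A]}(b) with respect to Lebesgue measure on ℝ^m × ℝ, then the kernel k(x,y) = ∫_{ℝ^m×ℝ} σ(a·x − b) conj(σ(a·y − b)) dλ(a,b) satisfies k(x,y) = ∫_{ℝ^m} ψ(a·(x − y)) ν(a) da; in particular k is translation invariant. -/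

import Mathlib

open MeasureTheory
open scoped ENNReal ComplexConjugate

/-- The measure on `ℝ^m × ℝ` with density `ν(a) · 1_{[-A,A]}(b)` with respect to
Lebesgue measure. -/
noncomputable def ridgeMeasure (m : ℕ) (A : ℝ) (ν : (Fin m → ℝ) → ℝ) :
    MeasureTheory.Measure ((Fin m → ℝ) × ℝ) :=
  (MeasureTheory.volume : MeasureTheory.Measure ((Fin m → ℝ) × ℝ)).withDensity
    (fun p => ENNReal.ofReal (ν p.1) * Set.indicator (Set.Icc (-A) A) (fun _ => 1) p.2)

private lemma part1_aux {A : ℝ} (hA : 0 < A) (σ : ℝ → ℂ)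
    (hσ_per : ∀ z : ℝ, σ (z + 2 * A) = σ z) (t s : ℝ) :
    (∫ b in Set.Icc (-A) A, σ (t - b) * conj (σ (s - b)))
      = ∫ v in Set.Icc (-A) A, σ v * conj (σ (v - (t - s))) := by
  set u := t - s with hu
  have hle : (-A : ℝ) ≤ A := by linarith
  have hper : Function.Periodic (fun v => σ v * conj (σ (v - u))) (2 * A) := by
    intro v
    simp only
    rw [hσ_per, show v + 2 * A - u = (v - u) + 2 * A by ring, hσ_per]
  calc ∫ b in Set.Icc (-A) A, σ (t - b) * conj (σ (s - b))
      = ∫ b in (-A)..A, σ (t - b) * conj (σ (s - b)) := by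
        rw [intervalIntegral.integral_of_le hle, MeasureTheory.integral_Icc_eq_integral_Ioc]
    _ = ∫ b in (-A)..A, (fun v => σ v * conj (σ (v - u))) (t - b) := by
        apply intervalIntegral.integral_congr
        intro b _
        simp only
        rw [show t - b - u = s - b by rw [hu]; ring]
    _ = ∫ v in (t - A)..(t + A), σ v * conj (σ (v - u)) := by
        simpa using intervalIntegral.integral_comp_sub_left (a := -A) (b := A)
          (fun v => σ v * conj (σ (v - u))) t
    _ = ∫ v in (-A)..A, σ v * conj (σ (v - u)) := by
        have h := hper.intervalIntegral_add_eq (t - A) (-A)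
        simp only [show t - A + 2 * A = t + A by ring,
          show -A + 2 * A = A by ring] at h
        exact h
    _ = ∫ v in Set.Icc (-A) A, σ v * conj (σ (v - u)) := by
        rw [intervalIntegral.integral_of_le hle, MeasureTheory.integral_Icc_eq_integral_Ioc]

/-- For a bounded measurable `2A`-periodic `σ`,
`∫_{[-A,A]} σ(t−b) conj(σ(s−b)) db = ψ(t−s)` where
`ψ(u) = ∫_{[-A,A]} σ(v) conj(σ(v−u)) dv`; consequently, for a nonnegative
`ν ∈ L¹(ℝ^m)` and `λ = ν(a) 1_{[-A,A]}(b) da db`, the kernel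
`k(x,y) = ∫ σ(a·x−b) conj(σ(a·y−b)) dλ(a,b)` satisfies
`k(x,y) = ∫ ψ(a·(x−y)) ν(a) da`; in particular `k` is translation invariant. -/
theorem stmt_4
    (m : ℕ) (A : ℝ) (hA : 0 < A)
    (σ : ℝ → ℂ) (hσ_meas : Measurable σ)
    (M : ℝ) (hσ_bdd : ∀ z : ℝ, ‖σ z‖ ≤ M)
    (hσ_per : ∀ z : ℝ, σ (z + 2 * A) = σ z)
    (ψ : ℝ → ℂ)
    (hψ : ∀ u : ℝ, ψ u = ∫ v in Set.Icc (-A) A, σ v * conj (σ (v - u)))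
    (ν : (Fin m → ℝ) → ℝ) (hν_int : Integrable ν) (hν_nonneg : ∀ a, 0 ≤ ν a) :
    (∀ t s : ℝ, (∫ b in Set.Icc (-A) A, σ (t - b) * conj (σ (s - b))) = ψ (t - s)) ∧
    (∀ x y : Fin m → ℝ,
        (∫ p, σ ((∑ i, p.1 i * x i) - p.2) * conj (σ ((∑ i, p.1 i * y i) - p.2))
            ∂(ridgeMeasure m A ν))
          = ∫ a : Fin m → ℝ, ψ (∑ i, a i * (x i - y i)) * (ν a : ℂ)) ∧
    (∀ x y z : Fin m → ℝ,
        (∫ p, σ ((∑ i, p.1 i * (x i + z i)) - p.2)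
              * conj (σ ((∑ i, p.1 i * (y i + z i)) - p.2)) ∂(ridgeMeasure m A ν))
          = ∫ p, σ ((∑ i, p.1 i * x i) - p.2)
              * conj (σ ((∑ i, p.1 i * y i) - p.2)) ∂(ridgeMeasure m A ν)) := by
  have hM : 0 ≤ M := le_trans (norm_nonneg _) (hσ_bdd 0)
  have key1 : ∀ t s : ℝ,
      (∫ b in Set.Icc (-A) A, σ (t - b) * conj (σ (s - b))) = ψ (t - s) := by
    intro t s
    rw [hψ]
    exact part1_aux hA σ hσ_per t s
  -- the indicator as a real function
  set ind : ℝ → ℝ := Set.indicator (Set.Icc (-A) A) (fun _ => (1 : ℝ)) with hind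
  have hind_meas : Measurable ind := measurable_const.indicator measurableSet_Icc
  have hind_nonneg : ∀ b, 0 ≤ ind b := fun b => Set.indicator_nonneg (fun _ _ => zero_le_one) b
  have hind_le_one : ∀ b, ind b ≤ 1 := fun b => Set.indicator_le_self' (fun _ _ => zero_le_one) b
  have hind_int : Integrable ind (volume : Measure ℝ) := by
    rw [hind, integrable_indicator_iff measurableSet_Icc]
    exact integrableOn_const measure_Icc_lt_top.ne
  -- rewrite the density as an ℝ≥0-valued density
  set d : (Fin m → ℝ) × ℝ → NNReal := fun p => (ν p.1 * ind p.2).toNNReal with hd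
  have hridge : ridgeMeasure m A ν
      = (volume : Measure ((Fin m → ℝ) × ℝ)).withDensity (fun p => ((d p : NNReal) : ℝ≥0∞)) := by
    unfold ridgeMeasure
    congr 1
    funext p
    by_cases hp : p.2 ∈ Set.Icc (-A) A
    · simp [hd, hind, hp, ENNReal.ofReal]
    · simp [hd, hind, hp, ENNReal.ofReal]
  have hν_aem : AEMeasurable ν (volume : Measure (Fin m → ℝ)) := hν_int.aemeasurable
  have hfst : AEMeasurable (fun p : (Fin m → ℝ) × ℝ => ν p.1)
      (volume : Measure ((Fin m → ℝ) × ℝ)) := by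
    rw [MeasureTheory.Measure.volume_eq_prod]
    exact hν_aem.comp_quasiMeasurePreserving Measure.quasiMeasurePreserving_fst
  have hd_aem : AEMeasurable d (volume : Measure ((Fin m → ℝ) × ℝ)) :=
    measurable_real_toNNReal.comp_aemeasurable
      (hfst.mul ((hind_meas.comp measurable_snd).aemeasurable))
  have hconj_meas : Measurable (conj : ℂ → ℂ) := RCLike.continuous_conj.measurable
  have hσc_meas : ∀ (c : Fin m → ℝ), Measurable fun p : (Fin m → ℝ) × ℝ =>
      σ ((∑ i, p.1 i * c i) - p.2) := by
    intro c
    apply hσ_meas.comp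
    exact (Finset.measurable_sum _ fun i _ =>
      ((measurable_pi_apply i).comp measurable_fst).mul_const _).sub measurable_snd
  -- the second statement
  have key2 : ∀ x y : Fin m → ℝ,
      (∫ p, σ ((∑ i, p.1 i * x i) - p.2) * conj (σ ((∑ i, p.1 i * y i) - p.2))
          ∂(ridgeMeasure m A ν))
        = ∫ a : Fin m → ℝ, ψ (∑ i, a i * (x i - y i)) * (ν a : ℂ) := by
    intro x y
    set F : (Fin m → ℝ) × ℝ → ℂ := fun p =>
      σ ((∑ i, p.1 i * x i) - p.2) * conj (σ ((∑ i, p.1 i * y i) - p.2)) with hF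
    have hF_meas : Measurable F := (hσc_meas x).mul (hconj_meas.comp (hσc_meas y))
    have hF_bdd : ∀ p, ‖F p‖ ≤ M * M := by
      intro p
      rw [hF]
      simp only [norm_mul, RCLike.norm_conj]
      exact mul_le_mul (hσ_bdd _) (hσ_bdd _) (norm_nonneg _) hM
    set H : (Fin m → ℝ) × ℝ → ℂ := fun p => (ν p.1 * ind p.2) • F p with hH
    have hH_meas : AEStronglyMeasurable H (volume : Measure ((Fin m → ℝ) × ℝ)) :=
      ((hfst.mul ((hind_meas.comp measurable_snd).aemeasurable)).aestronglyMeasurable).smul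
        hF_meas.aestronglyMeasurable
    have hg_int : Integrable (fun p : (Fin m → ℝ) × ℝ => (|ν p.1| * ind p.2) * (M * M))
        (volume : Measure ((Fin m → ℝ) × ℝ)) := by
      rw [MeasureTheory.Measure.volume_eq_prod]
      exact (hν_int.abs.mul_prod hind_int).mul_const _
    have hH_int : Integrable H (volume : Measure ((Fin m → ℝ) × ℝ)) := by
      apply Integrable.mono' hg_int hH_meas
      refine Filter.Eventually.of_forall fun p => ?_
      calc ‖H p‖ = |ν p.1 * ind p.2| * ‖F p‖ := by
            rw [hH]; rw [norm_smul, Real.norm_eq_abs]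
        _ = |ν p.1| * ind p.2 * ‖F p‖ := by
            rw [abs_mul, abs_of_nonneg (hind_nonneg _)]
        _ ≤ |ν p.1| * ind p.2 * (M * M) :=
            mul_le_mul_of_nonneg_left (hF_bdd p)
              (mul_nonneg (abs_nonneg _) (hind_nonneg _))
    have step1 : (∫ p, F p ∂(ridgeMeasure m A ν)) = ∫ p, H p := by
      rw [hridge, integral_withDensity_eq_integral_smul₀ hd_aem]
      apply integral_congr_ae
      refine Filter.Eventually.of_forall fun p => ?_
      rw [hH, hd]
      simp only [NNReal.smul_def, Real.coe_toNNReal _ (mul_nonneg (hν_nonneg _) (hind_nonneg _))]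
    have step2 : (∫ p, H p) = ∫ a, ∫ b, H (a, b) := by
      rw [MeasureTheory.Measure.volume_eq_prod]
      exact integral_prod _ (by rwa [MeasureTheory.Measure.volume_eq_prod] at hH_int)
    have inner : ∀ a : Fin m → ℝ,
        (∫ b, H (a, b)) = ψ (∑ i, a i * (x i - y i)) * (ν a : ℂ) := by
      intro a
      have h1 : ∀ b : ℝ, H (a, b) = ν a • (ind b • F (a, b)) := by
        intro b; rw [hH]; simp only [mul_smul]
      simp only [h1]
      rw [integral_smul]
      have h2 : (fun b => ind b • F (a, b))
          = Set.indicator (Set.Icc (-A) A) (fun b => F (a, b)) := by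
        funext b
        by_cases hb : b ∈ Set.Icc (-A) A
        · simp [hind, hb]
        · simp [hind, hb]
      rw [h2, integral_indicator measurableSet_Icc]
      have h3 : (∫ b in Set.Icc (-A) A, F (a, b))
          = ψ ((∑ i, a i * x i) - (∑ i, a i * y i)) :=
        key1 (∑ i, a i * x i) (∑ i, a i * y i)
      rw [h3, show (∑ i, a i * x i) - (∑ i, a i * y i) = ∑ i, a i * (x i - y i) by
        rw [← Finset.sum_sub_distrib]; exact Finset.sum_congr rfl fun i _ => (mul_sub _ _ _).symm]
      rw [Complex.real_smul, mul_comm]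
    rw [step1, step2]
    exact integral_congr_ae (Filter.Eventually.of_forall fun a => inner a)
  refine ⟨key1, key2, ?_⟩
  intro x y z
  have h1 := key2 (x + z) (y + z)
  simp only [Pi.add_apply] at h1
  rw [h1, key2 x y]
  simp only [add_sub_add_right_eq_sub]
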